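/- Let 𝔻 be a relative entropy that is not faithful, i.e. there exist n ∈ ℕ and p̃, q̃ ∈ P(n) with p̃ ≠ q̃ and 𝔻(p̃‖q̃) = 0. Then 𝔻(p‖q) = 0 for every m ∈ ℕ and all p, q ∈ P(m) with supp(p) = supp(q). -/

import Mathlib

open scoped BigOperators ENNReal

/-- A probability vector: nonnegative entries summing to 1. -/
def IsProbVec {n : ℕ} (p : Fin n → ℝ) : Prop :=
  (∀ i, 0 ≤ p i) ∧ ∑ i, p i = 1

/-- The uniform probability vector on `n` outcomes. -/
noncomputable def uniform (n : ℕ) : Fin n → ℝ := fun _ => (n : ℝ)⁻¹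

/-- Kronecker (tensor) product of two vectors. -/
noncomputable def kron {n m : ℕ} (p : Fin n → ℝ) (q : Fin m → ℝ) : Fin (n * m) → ℝ :=
  fun i => p (finProdFinEquiv.symm i).1 * q (finProdFinEquiv.symm i).2

/-- Sum of the `k` largest entries (for vectors with nonnegative entries):
the supremum of sums over subsets of at most `k` indices. -/
noncomputable def maxPartialSum {n : ℕ} (p : Fin n → ℝ) (k : ℕ) : ℝ :=
  sSup { x | ∃ s : Finset (Fin n), s.card ≤ k ∧ ∑ i ∈ s, p i = x }

/-- `p` majorises `q`: every partial sum of the `k` largest entries of `p`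
dominates that of `q` (entries beyond a vector's length count as 0). -/
def Majorizes {n m : ℕ} (p : Fin n → ℝ) (q : Fin m → ℝ) : Prop :=
  ∀ k : ℕ, maxPartialSum q k ≤ maxPartialSum p k

/-- A channel: an `n × m` row-stochastic matrix. -/
def IsStochastic {n m : ℕ} (W : Matrix (Fin n) (Fin m) ℝ) : Prop :=
  (∀ i j, 0 ≤ W i j) ∧ ∀ i, ∑ j, W i j = 1

/-- Relative majorisation of pairs: some channel maps `(p, q)` to `(p', q')`. -/
def RelMaj {n m : ℕ} (p q : Fin n → ℝ) (p' q' : Fin m → ℝ) : Prop :=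
  ∃ W : Matrix (Fin n) (Fin m) ℝ, IsStochastic W ∧
    Matrix.vecMul p W = p' ∧ Matrix.vecMul q W = q'

/-- An entropy: a `[0,∞)`-valued function on probability vectors of all finite dimensions
that is monotone under mixing (majorisation), additive for Kronecker products,
and normalised so that `H(u₂) = log 2` (binary logarithm). -/
structure IsEntropy (H : (n : ℕ) → (Fin n → ℝ) → ℝ) : Prop where
  nonneg : ∀ {n : ℕ} (p : Fin n → ℝ), IsProbVec p → 0 ≤ H n p
  mono : ∀ {n m : ℕ} (p : Fin n → ℝ) (p' : Fin m → ℝ),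
    IsProbVec p → IsProbVec p' → Majorizes p p' → H n p ≤ H m p'
  additive : ∀ {n m : ℕ} (p : Fin n → ℝ) (q : Fin m → ℝ),
    IsProbVec p → IsProbVec q → H (n * m) (kron p q) = H n p + H m q
  normalized : H 2 (uniform 2) = Real.logb 2 2

/-- A monotone divergence: a `[0,∞]`-valued function on pairs of probability vectors of
equal finite dimension satisfying the data-processing inequality and `𝔻(1‖1) = 0`. -/
structure IsMonotoneDivergence (D : (n : ℕ) → (Fin n → ℝ) → (Fin n → ℝ) → ℝ≥0∞) : Prop where
  dpi : ∀ {n m : ℕ} (p q : Fin n → ℝ) (p' q' : Fin m → ℝ),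
    IsProbVec p → IsProbVec q → IsProbVec p' → IsProbVec q' →
    RelMaj p q p' q' → D m p' q' ≤ D n p q
  normalized : D 1 (fun _ => 1) (fun _ => 1) = 0

/-- A relative entropy: data-processing inequality, additivity for Kronecker products,
and the normalisation `𝔻(e₁‖u₂) = log 2` (binary logarithm). -/
structure IsRelativeEntropy (D : (n : ℕ) → (Fin n → ℝ) → (Fin n → ℝ) → ℝ≥0∞) : Prop where
  dpi : ∀ {n m : ℕ} (p q : Fin n → ℝ) (p' q' : Fin m → ℝ),
    IsProbVec p → IsProbVec q → IsProbVec p' → IsProbVec q' →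
    RelMaj p q p' q' → D m p' q' ≤ D n p q
  additive : ∀ {n m : ℕ} (p₁ q₁ : Fin n → ℝ) (p₂ q₂ : Fin m → ℝ),
    IsProbVec p₁ → IsProbVec q₁ → IsProbVec p₂ → IsProbVec q₂ →
    D (n * m) (kron p₁ p₂) (kron q₁ q₂) = D n p₁ q₁ + D m p₂ q₂
  normalized : D 2 ![1, 0] ![1/2, 1/2] = ENNReal.ofReal (Real.logb 2 2)

/-! ### Auxiliary definitions and lemmas -/

/-- The binary probability vector `(α, 1-α)`. -/
noncomputable def bp (α : ℝ) : Fin 2 → ℝ := ![α, 1-α]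

lemma bp_prob {α : ℝ} (h0 : 0 ≤ α) (h1 : α ≤ 1) : IsProbVec (bp α) := by
  constructor
  · intro i; fin_cases i <;> simp [bp] <;> linarith
  · simp [bp, Fin.sum_univ_two]

lemma kron_sum {n m : ℕ} (p : Fin n → ℝ) (q : Fin m → ℝ) :
    ∑ i, kron p q i = (∑ i, p i) * (∑ j, q j) := by
  rw [← Equiv.sum_comp finProdFinEquiv (kron p q)]
  rw [Fintype.sum_prod_type]
  rw [Finset.sum_mul_sum]
  apply Finset.sum_congr rfl
  intro a _
  apply Finset.sum_congr rfl
  intro b _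
  simp [kron]

lemma kron_prob {n m : ℕ} {p : Fin n → ℝ} {q : Fin m → ℝ}
    (hp : IsProbVec p) (hq : IsProbVec q) : IsProbVec (kron p q) := by
  refine ⟨fun i => mul_nonneg (hp.1 _) (hq.1 _), ?_⟩
  rw [kron_sum, hp.2, hq.2, one_mul]

lemma exists_gt {n : ℕ} {pt qt : Fin n → ℝ} (hpt : IsProbVec pt) (hqt : IsProbVec qt)
    (hne : pt ≠ qt) : ∃ i, qt i < pt i := by
  by_contra h
  push_neg at h
  apply hne
  funext i
  by_contra hi
  have hlt : pt i < qt i := lt_of_le_of_ne (h i) hi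
  have : ∑ j, pt j < ∑ j, qt j :=
    Finset.sum_lt_sum (fun j _ => h j) ⟨i, Finset.mem_univ i, hlt⟩
  rw [hpt.2, hqt.2] at this
  exact lt_irrefl 1 this

lemma relmaj_binary {n : ℕ} (p q : Fin n → ℝ) (hp : IsProbVec p) (hq : IsProbVec q) (i : Fin n) :
    RelMaj p q (bp (p i)) (bp (q i)) := by
  refine ⟨fun j => ![if j = i then 1 else 0, if j = i then 0 else 1], ⟨?_, ?_⟩, ?_, ?_⟩
  · intro a b; fin_cases b <;> simp <;> split <;> norm_num
  · intro a; simp [Fin.sum_univ_two]; split <;> norm_num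
  all_goals {
    funext j
    have key : ∀ f : Fin n → ℝ, (∑ x, if x = i then (0:ℝ) else f x) = (∑ x, f x) - f i := by
      intro f
      have h1 : (∑ x, if x = i then (0:ℝ) else f x)
          = ∑ x, (f x - if x = i then f x else 0) := by
        apply Finset.sum_congr rfl; intro x _; split <;> simp
      rw [h1, Finset.sum_sub_distrib, Finset.sum_ite_eq' Finset.univ i f]
      simp
    fin_cases j <;>
      simp [Matrix.vecMul, dotProduct, bp, key, hp.2, hq.2] }

lemma relmaj_affine {α β x y : ℝ} (hx0 : 0 ≤ x) (hx1 : x ≤ 1) (hy0 : 0 ≤ y) (hy1 : y ≤ 1) :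
    RelMaj (bp α) (bp β) (bp (α*x+(1-α)*y)) (bp (β*x+(1-β)*y)) := by
  refine ⟨![![x, 1-x], ![y, 1-y]], ⟨?_, ?_⟩, ?_, ?_⟩
  · intro a b; fin_cases a <;> fin_cases b <;> simp <;> linarith
  · intro a; fin_cases a <;> simp [Fin.sum_univ_two]
  all_goals {
    funext j
    fin_cases j <;>
      simp [Matrix.vecMul, dotProduct, bp, Fin.sum_univ_two] <;> ring }

lemma relmaj_and (α β α' β' : ℝ) :
    RelMaj (kron (bp α) (bp α')) (kron (bp β) (bp β')) (bp (α*α')) (bp (β*β')) := by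
  refine ⟨fun i => if (finProdFinEquiv.symm i) = ((0 : Fin 2), (0 : Fin 2)) then ![1,0] else ![0,1],
    ⟨?_, ?_⟩, ?_, ?_⟩
  · intro a b; dsimp only; split <;> fin_cases b <;> simp
  · intro a; dsimp only; split <;> simp [Fin.sum_univ_two]
  all_goals {
    funext j
    have : ∀ u v : ℝ, (Matrix.vecMul (kron (bp u) (bp v))
        (fun i => if (finProdFinEquiv.symm i) = ((0 : Fin 2), (0 : Fin 2)) then ![1,0] else ![0,1])) j
        = bp (u*v) j := by
      intro u v
      simp only [Matrix.vecMul, dotProduct]; rw [← Equiv.sum_comp finProdFinEquiv]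
      simp only [kron, Equiv.symm_apply_apply]
      rw [Fintype.sum_prod_type]
      fin_cases j <;>
        simp [Fin.sum_univ_two, bp, Prod.ext_iff] <;> ring
    exact this _ _ }

lemma relmaj_or (α β α' β' : ℝ) :
    RelMaj (kron (bp α) (bp α')) (kron (bp β) (bp β')) (bp (α+α'-α*α')) (bp (β+β'-β*β')) := by
  refine ⟨fun i => if (finProdFinEquiv.symm i) = ((1 : Fin 2), (1 : Fin 2)) then ![0,1] else ![1,0],
    ⟨?_, ?_⟩, ?_, ?_⟩
  · intro a b; dsimp only; split <;> fin_cases b <;> simp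
  · intro a; dsimp only; split <;> simp [Fin.sum_univ_two]
  all_goals {
    funext j
    have : ∀ u v : ℝ, (Matrix.vecMul (kron (bp u) (bp v))
        (fun i => if (finProdFinEquiv.symm i) = ((1 : Fin 2), (1 : Fin 2)) then ![0,1] else ![1,0])) j
        = bp (u+v-u*v) j := by
      intro u v
      simp only [Matrix.vecMul, dotProduct]; rw [← Equiv.sum_comp finProdFinEquiv]
      simp only [kron, Equiv.symm_apply_apply]
      rw [Fintype.sum_prod_type]
      fin_cases j <;>
        simp [Fin.sum_univ_two, bp, Prod.ext_iff] <;> ring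
    exact this _ _ }

lemma convex_mem {c x y : ℝ} (hc0 : 0 ≤ c) (hc1 : c ≤ 1) (hx0 : 0 ≤ x) (hx1 : x ≤ 1)
    (hy0 : 0 ≤ y) (hy1 : y ≤ 1) : 0 ≤ c*x+(1-c)*y ∧ c*x+(1-c)*y ≤ 1 := by
  constructor <;> nlinarith

lemma relmaj_final {m : ℕ} (p q : Fin m → ℝ) (hp : IsProbVec p) (hq : IsProbVec q)
    {α β : ℝ} (hab : β < α)
    (h1 : ∀ i, (1-α) * q i ≤ (1-β) * p i) (h2 : ∀ i, β * p i ≤ α * q i) :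
    RelMaj (bp α) (bp β) p q := by
  have hd : (0:ℝ) < α - β := by linarith
  have hd' : α - β ≠ 0 := ne_of_gt hd
  refine ⟨![fun i => ((1-β)*p i - (1-α)*q i)/(α-β), fun i => (α*q i - β*p i)/(α-β)],
    ⟨?_, ?_⟩, ?_, ?_⟩
  · intro a b
    fin_cases a <;> simp only [Fin.mk_zero, Fin.mk_one, Fin.isValue, Matrix.cons_val_zero,
        Matrix.cons_val_one, Matrix.head_cons] <;>
      apply div_nonneg _ (le_of_lt hd)
    · linarith [h1 b]
    · linarith [h2 b]
  · intro a
    have key : ∀ (c1 c2 : ℝ) (f g : Fin m → ℝ), (∑ x, f x) = 1 → (∑ x, g x) = 1 →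
        (∑ x : Fin m, (c1 * f x - c2 * g x)/(α-β)) = (c1-c2)/(α-β) := by
      intro c1 c2 f g hf hg
      rw [← Finset.sum_div, Finset.sum_sub_distrib, ← Finset.mul_sum, ← Finset.mul_sum,
        hf, hg, mul_one, mul_one]
    fin_cases a <;>
      simp only [Fin.mk_zero, Fin.mk_one, Fin.isValue, Matrix.cons_val_zero, Matrix.cons_val_one,
        Matrix.head_cons]
    · rw [key (1-β) (1-α) p q hp.2 hq.2]; field_simp; ring
    · rw [key α β q p hq.2 hp.2]; field_simp
  all_goals {
    funext i
    simp only [Matrix.vecMul, dotProduct, Fin.sum_univ_two, bp,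
      Matrix.cons_val_zero, Matrix.cons_val_one, Matrix.head_cons]
    field_simp
    ring }

/-! ### Dynamics of the amplification map -/

noncomputable def gfun (x : ℝ) : ℝ := 2*x^2 - x^4

noncomputable def phi : ℝ := (Real.sqrt 5 - 1) / 2

lemma phi_eq : phi^2 + phi - 1 = 0 := by
  have h : Real.sqrt 5 ^ 2 = 5 := Real.sq_sqrt (by norm_num)
  unfold phi; nlinarith [h]

lemma phi_pos : 0 < phi := by
  have h : (2:ℝ) < Real.sqrt 5 := by
    rw [show (2:ℝ) = Real.sqrt 4 by rw [show (4:ℝ) = 2^2 by norm_num, Real.sqrt_sq]; norm_num]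
    exact Real.sqrt_lt_sqrt (by norm_num) (by norm_num)
  unfold phi; linarith

lemma phi_lt_one : phi < 1 := by
  have h : Real.sqrt 5 < 3 := by
    rw [show (3:ℝ) = Real.sqrt 9 by rw [show (9:ℝ) = 3^2 by norm_num, Real.sqrt_sq]; norm_num]
    exact Real.sqrt_lt_sqrt (by norm_num) (by norm_num)
  unfold phi; linarith

lemma gfun_sub (x : ℝ) : gfun x - x = x * (1 - x) * (x^2 + x - 1) := by unfold gfun; ring

lemma gfun_mem {x : ℝ} (h0 : 0 ≤ x) (h1 : x ≤ 1) : 0 ≤ gfun x ∧ gfun x ≤ 1 := by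
  have hx2 : x^2 ≤ 1 := by nlinarith
  constructor <;> unfold gfun
  · nlinarith [sq_nonneg x]
  · nlinarith [sq_nonneg (1 - x^2)]

lemma up_inv {x : ℝ} (h0 : phi < x) (h1 : x ≤ 1) : (phi < gfun x ∧ gfun x ≤ 1) ∧ x ≤ gfun x := by
  have key : x ≤ gfun x := by
    have h2 : 0 ≤ x^2 + x - 1 := by nlinarith [phi_eq, phi_pos]
    have hx0 : (0:ℝ) ≤ x := le_of_lt (lt_trans phi_pos h0)
    have hx1 : (0:ℝ) ≤ 1 - x := by linarith
    nlinarith [gfun_sub x, mul_nonneg (mul_nonneg hx0 hx1) h2]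
  exact ⟨⟨lt_of_lt_of_le h0 key, (gfun_mem (by linarith [phi_pos]) h1).2⟩, key⟩

lemma down_inv {x : ℝ} (h0 : 0 ≤ x) (h1 : x < phi) : (0 ≤ gfun x ∧ gfun x < phi) ∧ gfun x ≤ x := by
  have key : gfun x ≤ x := by
    have h2 : x^2 + x - 1 ≤ 0 := by nlinarith [phi_eq, phi_pos]
    have hx1 : (0:ℝ) ≤ 1 - x := by linarith [phi_lt_one]
    nlinarith [gfun_sub x, mul_nonneg (mul_nonneg h0 hx1) (neg_nonneg.2 h2)]
  exact ⟨⟨(gfun_mem h0 (by linarith [phi_lt_one])).1, lt_of_le_of_lt key h1⟩, key⟩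

lemma up_iter {x : ℝ} (h0 : phi < x) (h1 : x ≤ 1) :
    ∀ k, phi < gfun^[k] x ∧ gfun^[k] x ≤ 1 := by
  intro k; induction k with
  | zero => exact ⟨h0, h1⟩
  | succ k ih => rw [Function.iterate_succ_apply']; exact (up_inv ih.1 ih.2).1

lemma down_iter {x : ℝ} (h0 : 0 ≤ x) (h1 : x < phi) :
    ∀ k, 0 ≤ gfun^[k] x ∧ gfun^[k] x < phi := by
  intro k; induction k with
  | zero => exact ⟨h0, h1⟩
  | succ k ih => rw [Function.iterate_succ_apply']; exact (down_inv ih.1 ih.2).1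

lemma gfun_cont : Continuous gfun := by unfold gfun; continuity

lemma up_tendsto {x : ℝ} (h0 : phi < x) (h1 : x ≤ 1) :
    Filter.Tendsto (fun k => gfun^[k] x) Filter.atTop (nhds 1) := by
  set u : ℕ → ℝ := fun k => gfun^[k] x with hu
  have hmono : Monotone u := by
    apply monotone_nat_of_le_succ
    intro k
    have h := up_iter h0 h1 k
    rw [hu]; simp only
    rw [Function.iterate_succ_apply']
    exact (up_inv h.1 h.2).2
  have hbdd : BddAbove (Set.range u) := ⟨1, by rintro y ⟨k, rfl⟩; exact (up_iter h0 h1 k).2⟩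
  have hlim := tendsto_atTop_ciSup hmono hbdd
  set L := ⨆ k, u k with hL
  have hL1 : L ≤ 1 := ciSup_le fun k => (up_iter h0 h1 k).2
  have hLphi : phi < L := lt_of_lt_of_le h0 (le_ciSup hbdd 0)
  have hfix : gfun L = L := by
    have h1' : Filter.Tendsto (fun k => u (k+1)) Filter.atTop (nhds L) :=
      hlim.comp (Filter.tendsto_add_atTop_nat 1)
    have h2' : Filter.Tendsto (fun k => gfun (u k)) Filter.atTop (nhds (gfun L)) :=
      (gfun_cont.tendsto L).comp hlim
    have heq : (fun k => u (k+1)) = fun k => gfun (u k) := by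
      funext k; rw [hu]; simp only; rw [Function.iterate_succ_apply']
    rw [heq] at h1'
    exact tendsto_nhds_unique h2' h1'
  have hLval : L = 1 := by
    have h := gfun_sub L
    rw [hfix] at h
    have h0' : L * (1 - L) * (L^2 + L - 1) = 0 := by linarith
    have hLpos : 0 < L := lt_trans phi_pos hLphi
    have hq : 0 < L^2 + L - 1 := by nlinarith [phi_eq, phi_pos]
    rcases mul_eq_zero.1 h0' with h' | h'
    · rcases mul_eq_zero.1 h' with h'' | h''
      · linarith
      · linarith
    · linarith
  rw [← hLval]; exact hlim

lemma down_tendsto {x : ℝ} (h0 : 0 ≤ x) (h1 : x < phi) :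
    Filter.Tendsto (fun k => gfun^[k] x) Filter.atTop (nhds 0) := by
  set u : ℕ → ℝ := fun k => gfun^[k] x with hu
  have hmono : Antitone u := by
    apply antitone_nat_of_succ_le
    intro k
    have h := down_iter h0 h1 k
    rw [hu]; simp only
    rw [Function.iterate_succ_apply']
    exact (down_inv h.1 h.2).2
  have hbdd : BddBelow (Set.range u) := ⟨0, by rintro y ⟨k, rfl⟩; exact (down_iter h0 h1 k).1⟩
  have hlim := tendsto_atTop_ciInf hmono hbdd
  set L := ⨅ k, u k with hL
  have hL0 : 0 ≤ L := le_ciInf fun k => (down_iter h0 h1 k).1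
  have hLphi : L < phi := lt_of_le_of_lt (ciInf_le hbdd 0) h1
  have hfix : gfun L = L := by
    have h1' : Filter.Tendsto (fun k => u (k+1)) Filter.atTop (nhds L) :=
      hlim.comp (Filter.tendsto_add_atTop_nat 1)
    have h2' : Filter.Tendsto (fun k => gfun (u k)) Filter.atTop (nhds (gfun L)) :=
      (gfun_cont.tendsto L).comp hlim
    have heq : (fun k => u (k+1)) = fun k => gfun (u k) := by
      funext k; rw [hu]; simp only; rw [Function.iterate_succ_apply']
    rw [heq] at h1'
    exact tendsto_nhds_unique h2' h1'
  have hLval : L = 0 := by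
    have h := gfun_sub L
    rw [hfix] at h
    have h0' : L * (1 - L) * (L^2 + L - 1) = 0 := by linarith
    have hq : L^2 + L - 1 < 0 := by nlinarith [phi_eq, phi_pos]
    have hl1 : L < 1 := lt_of_lt_of_le hLphi (le_of_lt phi_lt_one)
    rcases mul_eq_zero.1 h0' with h' | h'
    · rcases mul_eq_zero.1 h' with h'' | h''
      · exact h''
      · linarith
    · linarith
  rw [← hLval]; exact hlim

/-! ### Divergence-level lemmas -/

lemma D_zero_mono {D : (n : ℕ) → (Fin n → ℝ) → (Fin n → ℝ) → ℝ≥0∞}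
    (hD : IsRelativeEntropy D) {n m : ℕ} {p q : Fin n → ℝ} {p' q' : Fin m → ℝ}
    (hp : IsProbVec p) (hq : IsProbVec q) (hp' : IsProbVec p') (hq' : IsProbVec q')
    (h : RelMaj p q p' q') (h0 : D n p q = 0) : D m p' q' = 0 :=
  le_antisymm (h0 ▸ hD.dpi p q p' q' hp hq hp' hq' h) zero_le

lemma D_gstep {D : (n : ℕ) → (Fin n → ℝ) → (Fin n → ℝ) → ℝ≥0∞}
    (hD : IsRelativeEntropy D) {α β : ℝ} (hα0 : 0 ≤ α) (hα1 : α ≤ 1) (hβ0 : 0 ≤ β) (hβ1 : β ≤ 1)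
    (hz : D 2 (bp α) (bp β) = 0) : D 2 (bp (gfun α)) (bp (gfun β)) = 0 := by
  have hpα := bp_prob hα0 hα1
  have hpβ := bp_prob hβ0 hβ1
  -- squaring (AND)
  have hsq0 : 0 ≤ α * α := mul_nonneg hα0 hα0
  have hsq1 : α * α ≤ 1 := by nlinarith
  have hsq0' : 0 ≤ β * β := mul_nonneg hβ0 hβ0
  have hsq1' : β * β ≤ 1 := by nlinarith
  have hz4 : D (2*2) (kron (bp α) (bp α)) (kron (bp β) (bp β)) = 0 := by
    rw [hD.additive (bp α) (bp β) (bp α) (bp β) hpα hpβ hpα hpβ, hz, add_zero]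
  have hzand : D 2 (bp (α*α)) (bp (β*β)) = 0 :=
    D_zero_mono hD (kron_prob hpα hpα) (kron_prob hpβ hpβ)
      (bp_prob hsq0 hsq1) (bp_prob hsq0' hsq1') (relmaj_and α β α β) hz4
  -- OR of two squared copies
  have hpa := bp_prob hsq0 hsq1
  have hpb := bp_prob hsq0' hsq1'
  have hz4' : D (2*2) (kron (bp (α*α)) (bp (α*α))) (kron (bp (β*β)) (bp (β*β))) = 0 := by
    rw [hD.additive _ _ _ _ hpa hpb hpa hpb, hzand, add_zero]
  have hg : gfun α = α*α + α*α - (α*α)*(α*α) := by unfold gfun; ring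
  have hg' : gfun β = β*β + β*β - (β*β)*(β*β) := by unfold gfun; ring
  have hgmem := gfun_mem hα0 hα1
  have hgmem' := gfun_mem hβ0 hβ1
  rw [hg, hg']
  exact D_zero_mono hD (kron_prob hpa hpa) (kron_prob hpb hpb)
    (by rw [← hg]; exact bp_prob hgmem.1 hgmem.2)
    (by rw [← hg']; exact bp_prob hgmem'.1 hgmem'.2)
    (relmaj_or (α*α) (β*β) (α*α) (β*β)) hz4'

/-- if a relative entropy is not faithful (it vanishes on some pair of
distinct probability vectors), then it vanishes on every pair of probability vectors
with equal support. -/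
theorem stmt14 (D : (n : ℕ) → (Fin n → ℝ) → (Fin n → ℝ) → ℝ≥0∞)
    (hD : IsRelativeEntropy D)
    (n : ℕ) (pt qt : Fin n → ℝ) (hpt : IsProbVec pt) (hqt : IsProbVec qt)
    (hne : pt ≠ qt) (hzero : D n pt qt = 0) :
    ∀ (m : ℕ) (p q : Fin m → ℝ), IsProbVec p → IsProbVec q →
      (∀ i, 0 < p i ↔ 0 < q i) → D m p q = 0 := by
  intro m p q hp hq hsupp
  -- Step 1: extract a binary pair (a, b) with b < a and D = 0
  obtain ⟨i, hi⟩ := exists_gt hpt hqt hne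
  set a := pt i with ha
  set b := qt i with hb
  have ha0 : 0 ≤ a := hpt.1 i
  have hb0 : 0 ≤ b := hqt.1 i
  have ha1 : a ≤ 1 := by
    rw [← hpt.2]; exact Finset.single_le_sum (fun j _ => hpt.1 j) (Finset.mem_univ i)
  have hb1 : b ≤ 1 := by
    rw [← hqt.2]; exact Finset.single_le_sum (fun j _ => hqt.1 j) (Finset.mem_univ i)
  have hz1 : D 2 (bp a) (bp b) = 0 :=
    D_zero_mono hD hpt hqt (bp_prob ha0 ha1) (bp_prob hb0 hb1)
      (relmaj_binary pt qt hpt hqt i) hzero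
  -- Step 2: affine move so the pair straddles phi
  set s : ℝ := min phi (1 - phi) with hs
  have hs0 : 0 < s := lt_min phi_pos (by linarith [phi_lt_one])
  have hsphi : s ≤ phi := min_le_left _ _
  have hsphi' : s ≤ 1 - phi := min_le_right _ _
  set t : ℝ := (a + b) / 2 with ht
  have ht0 : 0 ≤ t := by rw [ht]; linarith
  have ht1 : t ≤ 1 := by rw [ht]; linarith
  set x : ℝ := phi + s * (1 - t) with hx
  set y : ℝ := phi - s * t with hy
  have hx0 : 0 ≤ x := by
    rw [hx]; nlinarith [phi_pos, mul_nonneg (le_of_lt hs0) (by linarith : (0:ℝ) ≤ 1 - t)]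
  have hx1 : x ≤ 1 := by rw [hx]; nlinarith [mul_nonneg (le_of_lt hs0) ht0]
  have hy0 : 0 ≤ y := by rw [hy]; nlinarith [mul_nonneg (le_of_lt hs0) ht0]
  have hy1 : y ≤ 1 := by
    rw [hy]; nlinarith [phi_lt_one, mul_nonneg (le_of_lt hs0) ht0]
  set A0 : ℝ := a * x + (1 - a) * y with hA0
  set B0 : ℝ := b * x + (1 - b) * y with hB0
  have hA0mem : 0 ≤ A0 ∧ A0 ≤ 1 := convex_mem ha0 ha1 hx0 hx1 hy0 hy1
  have hB0mem : 0 ≤ B0 ∧ B0 ≤ 1 := convex_mem hb0 hb1 hx0 hx1 hy0 hy1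
  have hz2 : D 2 (bp A0) (bp B0) = 0 := by
    exact D_zero_mono hD (bp_prob ha0 ha1) (bp_prob hb0 hb1)
      (bp_prob hA0mem.1 hA0mem.2) (bp_prob hB0mem.1 hB0mem.2)
      (relmaj_affine hx0 hx1 hy0 hy1) hz1
  have hA0phi : phi < A0 := by
    have : A0 - phi = s * ((a - b) / 2) := by rw [hA0, hx, hy, ht]; ring
    linarith [mul_pos hs0 (by linarith : (0:ℝ) < (a - b) / 2)]
  have hA0le : A0 ≤ 1 := hA0mem.2
  have hB0ge : 0 ≤ B0 := hB0mem.1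
  have hB0phi : B0 < phi := by
    have : B0 - phi = -(s * ((a - b) / 2)) := by rw [hB0, hx, hy, ht]; ring
    linarith [mul_pos hs0 (by linarith : (0:ℝ) < (a - b) / 2)]
  -- Step 3: amplify
  set A : ℕ → ℝ := fun k => gfun^[k] A0 with hA
  set B : ℕ → ℝ := fun k => gfun^[k] B0 with hB
  have hAk : ∀ k, phi < A k ∧ A k ≤ 1 := up_iter hA0phi hA0le
  have hBk : ∀ k, 0 ≤ B k ∧ B k < phi := down_iter hB0ge hB0phi
  have hzk : ∀ k, D 2 (bp (A k)) (bp (B k)) = 0 := by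
    intro k; induction k with
    | zero => exact hz2
    | succ k ih =>
        have h1 := hAk k
        have h2 := hBk k
        have e1 : A (k+1) = gfun (A k) := by
          rw [hA]; simp only; rw [Function.iterate_succ_apply']
        have e2 : B (k+1) = gfun (B k) := by
          rw [hB]; simp only; rw [Function.iterate_succ_apply']
        rw [e1, e2]
        exact D_gstep hD (le_of_lt (lt_trans phi_pos h1.1)) h1.2 h2.1
          (le_of_lt (lt_trans h2.2 phi_lt_one)) ih
  -- Step 4: choose k large enough for the final channel
  have hAt : Filter.Tendsto A Filter.atTop (nhds 1) := up_tendsto hA0phi hA0le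
  have hBt : Filter.Tendsto B Filter.atTop (nhds 0) := down_tendsto hB0ge hB0phi
  have hcond1 : ∀ᶠ k in Filter.atTop, ∀ j, (1 - A k) * q j ≤ (1 - B k) * p j := by
    rw [Filter.eventually_all]
    intro j
    rcases le_or_gt (q j) 0 with hqj | hqj
    · have hqj0 : q j = 0 := le_antisymm hqj (hq.1 j)
      apply Filter.Eventually.of_forall
      intro k
      rw [hqj0, mul_zero]
      exact mul_nonneg (by linarith [(hBk k).2, phi_lt_one]) (hp.1 j)
    · have hpj : 0 < p j := (hsupp j).2 hqj
      have hT : Filter.Tendsto (fun k => (1 - B k) * p j - (1 - A k) * q j)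
          Filter.atTop (nhds ((1 - 0) * p j - (1 - 1) * q j)) := by
        apply Filter.Tendsto.sub
        · exact (tendsto_const_nhds.sub hBt).mul tendsto_const_nhds
        · exact (tendsto_const_nhds.sub hAt).mul tendsto_const_nhds
      have hpos : (0:ℝ) < (1 - 0) * p j - (1 - 1) * q j := by simpa using hpj
      filter_upwards [hT.eventually (eventually_gt_nhds hpos)] with k hk
      linarith
  have hcond2 : ∀ᶠ k in Filter.atTop, ∀ j, B k * p j ≤ A k * q j := by
    rw [Filter.eventually_all]
    intro j
    rcases le_or_gt (p j) 0 with hpj | hpj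
    · have hpj0 : p j = 0 := le_antisymm hpj (hp.1 j)
      apply Filter.Eventually.of_forall
      intro k
      rw [hpj0, mul_zero]
      exact mul_nonneg (le_of_lt (lt_trans phi_pos (hAk k).1)) (hq.1 j)
    · have hqj : 0 < q j := (hsupp j).1 hpj
      have hT : Filter.Tendsto (fun k => A k * q j - B k * p j)
          Filter.atTop (nhds (1 * q j - 0 * p j)) := by
        apply Filter.Tendsto.sub
        · exact hAt.mul tendsto_const_nhds
        · exact hBt.mul tendsto_const_nhds
      have hpos : (0:ℝ) < 1 * q j - 0 * p j := by simpa using hqj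
      filter_upwards [hT.eventually (eventually_gt_nhds hpos)] with k hk
      linarith
  obtain ⟨k, hk1, hk2⟩ := (hcond1.and hcond2).exists
  have hABk : B k < A k := lt_trans (hBk k).2 (hAk k).1
  exact D_zero_mono hD
    (bp_prob (le_of_lt (lt_trans phi_pos (hAk k).1)) (hAk k).2)
    (bp_prob (hBk k).1 (le_of_lt (lt_trans (hBk k).2 phi_lt_one)))
    hp hq (relmaj_final p q hp hq hABk hk1 hk2) (hzk k)
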